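/- Small-r two-sided asymptotics for the nonlinearity of the Φ equation: there exist constants c > 0 and C > 0 such that for all r ∈ (0, 1/2] and all v ≥ 0 with r v ≤ 1, c (v³ + v⁴) ≤ ∫₀^v ( (3/2) Ã(r,y)^{1/2} + (1/2) Ã(r,y)^{-3/2} ) ( Ã(r,y) − 1 ) dy ≤ C (v³ + v⁴). -/

import Mathlib

open Real Set

/-- `Ã(r,y) = 1 + 2 sin²(ry) / r²`. -/
noncomputable def Atil (r y : ℝ) : ℝ := 1 + 2 * Real.sin (r * y) ^ 2 / r ^ 2

set_option maxHeartbeats 2000000 in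
/-- Small-`r` two-sided asymptotics for the nonlinearity of the `Φ` equation. -/
theorem small_r_asymptotics_nonlinearity :
    ∃ c : ℝ, 0 < c ∧ ∃ C : ℝ, 0 < C ∧
      ∀ r ∈ Set.Ioc (0:ℝ) (1/2), ∀ v : ℝ, 0 ≤ v → r * v ≤ 1 →
        c * (v ^ 3 + v ^ 4)
            ≤ (∫ y in (0:ℝ)..v,
                ((3/2) * (Atil r y) ^ ((1:ℝ)/2) + (1/2) * (Atil r y) ^ (-(3:ℝ)/2))
                  * (Atil r y - 1)) ∧
        (∫ y in (0:ℝ)..v,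
            ((3/2) * (Atil r y) ^ ((1:ℝ)/2) + (1/2) * (Atil r y) ^ (-(3:ℝ)/2))
              * (Atil r y - 1))
          ≤ C * (v ^ 3 + v ^ 4) := by
  refine ⟨3/16, by norm_num, 2, by norm_num, ?_⟩
  rintro r ⟨hr0, hr2⟩ v hv hrv
  have hr2pos : (0:ℝ) < r ^ 2 := by positivity
  have hAnn : ∀ y, 0 ≤ 2 * Real.sin (r * y) ^ 2 / r ^ 2 := fun y => by positivity
  have hA1 : ∀ y, 1 ≤ Atil r y := fun y => by
    have := hAnn y; unfold Atil; linarith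
  have hApos : ∀ y, 0 < Atil r y := fun y => lt_of_lt_of_le one_pos (hA1 y)
  set f : ℝ → ℝ := fun y =>
    ((3/2) * (Atil r y) ^ ((1:ℝ)/2) + (1/2) * (Atil r y) ^ (-(3:ℝ)/2)) * (Atil r y - 1)
    with hf
  have hAcont : Continuous (Atil r) := by
    unfold Atil
    exact continuous_const.add
      ((continuous_const.mul (((Real.continuous_sin.comp
        (continuous_const.mul continuous_id)).pow 2))).div_const _)
  have hfc : Continuous f := by
    apply Continuous.mul
    · exact (continuous_const.mul (hAcont.rpow_const fun y => Or.inl (hApos y).ne')).add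
        (continuous_const.mul (hAcont.rpow_const fun y => Or.inl (hApos y).ne'))
    · exact hAcont.sub continuous_const
  have hint : IntervalIntegrable f MeasureTheory.volume 0 v :=
    hfc.intervalIntegrable _ _
  have hpolyint : ∀ a b : ℝ,
      IntervalIntegrable (fun y : ℝ => a * y ^ 2 + b * y ^ 3) MeasureTheory.volume 0 v :=
    fun a b => ((continuous_const.mul (continuous_pow 2)).add
      (continuous_const.mul (continuous_pow 3))).intervalIntegrable _ _
  have hpolyval : ∀ a b : ℝ,
      (∫ y in (0:ℝ)..v, (a * y ^ 2 + b * y ^ 3)) = a * v ^ 3 / 3 + b * v ^ 4 / 4 := by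
    intro a b
    rw [intervalIntegral.integral_add
        (show IntervalIntegrable (fun y : ℝ => a * y ^ 2) MeasureTheory.volume 0 v from
          (continuous_const.mul (continuous_pow 2)).intervalIntegrable _ _)
        (show IntervalIntegrable (fun y : ℝ => b * y ^ 3) MeasureTheory.volume 0 v from
          (continuous_const.mul (continuous_pow 3)).intervalIntegrable _ _),
      intervalIntegral.integral_const_mul, intervalIntegral.integral_const_mul,
      integral_pow, integral_pow]
    norm_num
    ring
  -- pointwise facts on [0, v]
  have key : ∀ y ∈ Set.Icc (0:ℝ) v,
      (3/4 * y ^ 2 + 3/4 * y ^ 3 ≤ f y) ∧ (f y ≤ 4 * y ^ 2 + 8 * y ^ 3) := by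
    rintro y ⟨hy0, hyv⟩
    set x := r * y with hx
    have hx0 : 0 ≤ x := by positivity
    have hx1 : x ≤ 1 := le_trans (by nlinarith) hrv
    have hsub : Real.sin x ≤ x := Real.sin_le hx0
    have hsnn : 0 ≤ Real.sin x :=
      Real.sin_nonneg_of_nonneg_of_le_pi hx0 (hx1.trans (by linarith [Real.pi_gt_three]))
    have hslb : 3/4 * x ≤ Real.sin x := by
      rcases eq_or_lt_of_le hx0 with h | h
      · simp [← h]
      · have h1 := Real.sin_gt_sub_cube h
        have h2 : 0 ≤ x * (1 - x) * (1 + x) :=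
          mul_nonneg (mul_nonneg hx0 (by linarith)) (by linarith)
        nlinarith [h1, h2]
    set Am1 := Atil r y - 1 with hAm1
    have hAm1eq : Am1 = 2 * Real.sin x ^ 2 / r ^ 2 := by
      simp [hAm1, Atil, hx]
    have hAm1lb : 9/8 * y ^ 2 ≤ Am1 := by
      rw [hAm1eq, le_div_iff₀ hr2pos]
      nlinarith
    have hAm1ub : Am1 ≤ 2 * y ^ 2 := by
      rw [hAm1eq, div_le_iff₀ hr2pos]
      nlinarith
    have hAm1nn : 0 ≤ Am1 := le_trans (by positivity) hAm1lb
    -- sqrt bounds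
    have hrw : (Atil r y) ^ ((1:ℝ)/2) = Real.sqrt (Atil r y) := (Real.sqrt_eq_rpow _).symm
    have hs1 : 1 ≤ Real.sqrt (Atil r y) := Real.one_le_sqrt.2 (hA1 y)
    have hsy : y ≤ Real.sqrt (Atil r y) := by
      rw [Real.le_sqrt hy0 (hApos y).le]
      nlinarith [hA1 y]
    have hsub2 : Real.sqrt (Atil r y) ≤ 1 + 2 * y := by
      have h1 : Atil r y ≤ (1 + 2 * y) ^ 2 := by nlinarith [hAm1ub, hAm1]
      calc Real.sqrt (Atil r y) ≤ Real.sqrt ((1 + 2*y)^2) := Real.sqrt_le_sqrt h1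
        _ = 1 + 2 * y := Real.sqrt_sq (by linarith)
    -- negative power bounds
    have ht0 : 0 < (Atil r y) ^ (-(3:ℝ)/2) := Real.rpow_pos_of_pos (hApos y) _
    have ht1 : (Atil r y) ^ (-(3:ℝ)/2) ≤ 1 :=
      Real.rpow_le_one_of_one_le_of_nonpos (hA1 y) (by norm_num)
    have hmul : y * (9/8 * y ^ 2) ≤ Real.sqrt (Atil r y) * Am1 :=
      mul_le_mul hsy hAm1lb (by positivity) (by linarith)
    have hmul2 : Am1 ≤ Real.sqrt (Atil r y) * Am1 := le_mul_of_one_le_left hAm1nn hs1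
    have hmul3 : 0 ≤ (Atil r y) ^ (-(3:ℝ)/2) * Am1 := mul_nonneg ht0.le hAm1nn
    have hcoef : (3/2) * Real.sqrt (Atil r y) + (1/2) * (Atil r y) ^ (-(3:ℝ)/2)
        ≤ 2 * (1 + 2 * y) := by linarith
    have hub : ((3/2) * Real.sqrt (Atil r y) + (1/2) * (Atil r y) ^ (-(3:ℝ)/2)) * Am1
        ≤ (2 * (1 + 2 * y)) * (2 * y ^ 2) :=
      mul_le_mul hcoef hAm1ub hAm1nn (by linarith)
    have hy2 : 0 ≤ y ^ 2 := by positivity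
    have hy3 : 0 ≤ y ^ 3 := by positivity
    simp only [hf, hrw, ← hAm1]
    clear_value x Am1
    generalize (Atil r y) ^ (-(3:ℝ)/2) = t at ht0 ht1 hmul3 hcoef hub ⊢
    generalize Real.sqrt (Atil r y) = s at hs1 hsy hsub2 hmul hmul2 hcoef hub ⊢
    constructor
    · linarith
    · linarith
  have hlow := intervalIntegral.integral_mono_on hv (hpolyint (3/4) (3/4)) hint
    (fun y hy => (key y hy).1)
  have hhigh := intervalIntegral.integral_mono_on hv hint (hpolyint 4 8)
    (fun y hy => (key y hy).2)
  rw [hpolyval] at hlow hhigh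
  have hv3 : 0 ≤ v ^ 3 := by positivity
  have hv4 : 0 ≤ v ^ 4 := by positivity
  constructor
  · calc (3/16 : ℝ) * (v ^ 3 + v ^ 4) ≤ 3/4 * v ^ 3 / 3 + 3/4 * v ^ 4 / 4 := by nlinarith
      _ ≤ _ := hlow
  · calc _ ≤ (4:ℝ) * v ^ 3 / 3 + 8 * v ^ 4 / 4 := hhigh
      _ ≤ 2 * (v ^ 3 + v ^ 4) := by nlinarith
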